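/- (Theorem 4, trimming) Let M be a partial matrix over a field F with rows m and columns n, and let v be a partial column on rows m with known row set K ⊆ m. Suppose there are columns d_1, …, d_t of M, each of which is a donor for v (in particular, each column d_i is known at every row in K). If the vector (v r)_{r ∈ K} lies in the F-linear span of the vectors (M r d_1)_{r ∈ K}, …, (M r d_t)_{r ∈ K}, then mr([v | M]) = mr(M). -/

import Mathlib

/-- `N` is a completion of the partial matrix `(M, Ω)`: it agrees with `M`
on all known positions `Ω`. -/
def IsCompletion {F m n : Type*} [Field F] (M : Matrix m n F) (Ω : Set (m × n))
    (N : Matrix m n F) : Prop :=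
  ∀ p ∈ Ω, N p.1 p.2 = M p.1 p.2

/-- The minimum rank of the partial matrix `(M, Ω)`: the minimum of the ranks of
its completions. -/
noncomputable def mr {F m n : Type*} [Field F] [Fintype m] [Fintype n]
    (M : Matrix m n F) (Ω : Set (m × n)) : ℕ :=
  sInf {r | ∃ N : Matrix m n F, IsCompletion M Ω N ∧ N.rank = r}

/-- The partial matrix `[u | A]`: the partial column `u` (with known row set `Ωu`)
adjoined as an extra (first) column to `A`. -/
def augMat {F m n : Type*} [Field F] (u : m → F) (A : Matrix m n F) :
    Matrix m (Unit ⊕ n) F :=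
  Matrix.of fun i => Sum.elim (fun _ => u i) (A i)

/-- Known positions of the partial matrix `[u | A]`, inherited from `Ωu` and `ΩA`. -/
def augSet {m n : Type*} (Ωu : Set m) (ΩA : Set (m × n)) : Set (m × (Unit ⊕ n)) :=
  {p | Sum.elim (fun _ => p.1 ∈ Ωu) (fun j => (p.1, j) ∈ ΩA) p.2}

/-- `zero (u, A) = 1`, as a proposition: every completion of `[u | A]` attaining the
minimum rank has zero `u`-column. -/
def zeroProp {F m n : Type*} [Field F] [Fintype m] [Fintype n]
    (u : m → F) (Ωu : Set m) (A : Matrix m n F) (ΩA : Set (m × n)) : Prop :=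
  ∀ N : Matrix m (Unit ⊕ n) F, IsCompletion (augMat u A) (augSet Ωu ΩA) N →
    N.rank = mr (augMat u A) (augSet Ωu ΩA) → ∀ i, N i (Sum.inl ()) = 0

open Matrix in
lemma span_cols_aug {F m n : Type*} [Field F] (u : m → F) (N : Matrix m n F) :
    Submodule.span F (Set.range (augMat u N)ᵀ) =
      Submodule.span F (insert u (Set.range Nᵀ)) := by
  have h : (augMat u N)ᵀ = Sum.elim (fun _ : Unit => u) (Nᵀ : n → m → F) := by
    funext j i; cases j <;> rfl
  erw [h, Set.Sum.elim_range, Set.range_const]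
  simp [Set.singleton_union]

open Matrix in
lemma rank_aug_of_mem_span {F m n : Type*} [Field F] [Fintype m] [Fintype n]
    (u : m → F) (N : Matrix m n F)
    (h : u ∈ Submodule.span F (Set.range Nᵀ)) :
    (augMat u N).rank = N.rank := by
  rw [Matrix.rank_eq_finrank_span_cols, Matrix.rank_eq_finrank_span_cols,
    show Submodule.span F (Set.range (augMat u N).col) =
      Submodule.span F (insert u (Set.range N.col)) from span_cols_aug u N,
    Submodule.span_insert_eq_span (show u ∈ Submodule.span F (Set.range N.col) from h)]

lemma mr_nonempty {F m n : Type*} [Field F] [Fintype m] [Fintype n]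
    (M : Matrix m n F) (Ω : Set (m × n)) :
    ∃ N : Matrix m n F, IsCompletion M Ω N ∧ N.rank = mr M Ω := by
  have hne : {r | ∃ N : Matrix m n F, IsCompletion M Ω N ∧ N.rank = r}.Nonempty :=
    ⟨M.rank, M, fun _ _ => rfl, rfl⟩
  exact Nat.sInf_mem hne

lemma mr_le {F m n : Type*} [Field F] [Fintype m] [Fintype n]
    (M : Matrix m n F) (Ω : Set (m × n)) (N : Matrix m n F)
    (h : IsCompletion M Ω N) : mr M Ω ≤ N.rank :=
  Nat.sInf_le ⟨N, h, rfl⟩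

open Matrix in
theorem mr_aug_eq_of_donor_span {F m n : Type*} [Field F] [Fintype m] [Fintype n]
    (M : Matrix m n F) (ΩM : Set (m × n)) (v : m → F) (K : Set m)
    {t : ℕ} (d : Fin t → n)
    (hdonor : ∀ (s : Fin t), ∀ r ∈ K, (r, d s) ∈ ΩM)
    (hspan : (fun r : K => v r) ∈
      Submodule.span F (Set.range fun s : Fin t => fun r : K => M r (d s))) :
    mr (augMat v M) (augSet K ΩM) = mr M ΩM := by
  apply le_antisymm
  · -- mr aug ≤ mr M
    obtain ⟨N, hN, hNr⟩ := mr_nonempty M ΩM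
    obtain ⟨c, hc⟩ := Submodule.mem_span_range_iff_exists_fun F |>.mp hspan
    set u : m → F := fun i => ∑ s, c s * N i (d s) with hu
    have hcomp : IsCompletion (augMat v M) (augSet K ΩM) (augMat u N) := by
      rintro ⟨r, j⟩ hp
      cases j with
      | inl _ =>
        have hr : r ∈ K := hp
        have := congrFun hc ⟨r, hr⟩
        simp only [Finset.sum_apply, Pi.smul_apply, smul_eq_mul] at this
        show u r = v r
        rw [hu]
        calc ∑ s, c s * N r (d s) = ∑ s, c s * M r (d s) := by
              refine Finset.sum_congr rfl fun s _ => ?_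
              rw [hN (r, d s) (hdonor s r hr)]
          _ = v r := this
      | inr j =>
        exact hN (r, j) hp
    have hrank : (augMat u N).rank = N.rank := by
      apply rank_aug_of_mem_span
      have : u = ∑ s, c s • Nᵀ (d s) := by
        funext i; simp [hu, Finset.sum_apply, mul_comm]
      rw [this]
      exact Submodule.sum_mem _ fun s _ =>
        Submodule.smul_mem _ _ (Submodule.subset_span ⟨d s, rfl⟩)
    calc mr (augMat v M) (augSet K ΩM) ≤ (augMat u N).rank := mr_le _ _ _ hcomp
      _ = N.rank := hrank
      _ = mr M ΩM := hNr
  · -- mr M ≤ mr aug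
    obtain ⟨N', hN', hN'r⟩ := mr_nonempty (augMat v M) (augSet K ΩM)
    set N : Matrix m n F := N'.submatrix id Sum.inr with hNdef
    have hcomp : IsCompletion M ΩM N := by
      rintro ⟨r, j⟩ hp
      have := hN' (r, Sum.inr j) (by exact hp)
      simpa [augMat, hNdef] using this
    have hrank : N.rank ≤ N'.rank := by
      rw [Matrix.rank_eq_finrank_span_cols, Matrix.rank_eq_finrank_span_cols]
      apply Submodule.finrank_mono
      apply Submodule.span_mono
      rintro _ ⟨j, rfl⟩
      exact ⟨Sum.inr j, rfl⟩
    calc mr M ΩM ≤ N.rank := mr_le _ _ _ hcomp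
      _ ≤ N'.rank := hrank
      _ = mr (augMat v M) (augSet K ΩM) := hN'r
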